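/- arXiv:1510.01355 — 3 statements merged into one kernel-verified Lean document; each statement's English description precedes it below -/
import Mathlib

section
/- Fix x̄ > 0, K ≥ 0 and C₀ ≥ 0. Let k_a : ℝ × ℝ → ℝ be measurable with |k_a(x, y)| ≤ K for all (x, y) ∈ [0, x̄] × [0, x̄], and let b, b̃ : ℝ → ℝ be measurable functions integrable on [0, x̄] with ∫₀^{x̄} |b| ≤ C₀ and ∫₀^{x̄} |b̃| ≤ C₀. Define the aggregation operator A[p](x) = (1/2)∫₀^{x} k_a(x − y, y) p(x − y) p(y) dy − p(x)∫₀^{x̄} k_a(x, y) p(y) dy. Then ∫₀^{x̄} |A[b](x) − A[b̃](x)| dx ≤ 3 C₀ K ∫₀^{x̄} |b(x) − b̃(x)| dx. -/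
open MeasureTheory intervalIntegral

/-- The aggregation operator of the flocculation model:
`A[p](x) = (1/2)∫₀ˣ k_a(x−y, y) p(x−y) p(y) dy − p(x)∫₀^{x̄} k_a(x, y) p(y) dy`. -/
noncomputable def aggOp (xbar : ℝ) (ka : ℝ → ℝ → ℝ) (p : ℝ → ℝ) (x : ℝ) : ℝ :=
  (1 / 2) * (∫ y in (0 : ℝ)..x, ka (x - y) y * p (x - y) * p y)
    - p x * ∫ y in (0 : ℝ)..xbar, ka x y * p y

section AggLipAux

open Set

namespace AggLip

/-- shear `(x, y) ↦ (x - y, y)` as a measurable equiv. -/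
noncomputable def shear : (ℝ × ℝ) ≃ᵐ (ℝ × ℝ) where
  toFun p := (p.1 - p.2, p.2)
  invFun p := (p.1 + p.2, p.2)
  left_inv p := by simp
  right_inv p := by simp
  measurable_toFun := (measurable_fst.sub measurable_snd).prodMk measurable_snd
  measurable_invFun := (measurable_fst.add measurable_snd).prodMk measurable_snd

lemma shear_mp : MeasurePreserving shear (volume : Measure (ℝ × ℝ)) volume := by
  rw [Measure.volume_eq_prod]
  exact measurePreserving_sub_prod volume volume

/-- truncated absolute value -/
noncomputable def af (xbar : ℝ) (f : ℝ → ℝ) : ℝ → ℝ :=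
  (Ioc (0:ℝ) xbar).indicator fun t => |f t|

lemma af_nonneg (xbar : ℝ) (f : ℝ → ℝ) (t : ℝ) : 0 ≤ af xbar f t :=
  Set.indicator_nonneg (fun x _ => abs_nonneg _) t

lemma af_meas {xbar : ℝ} {f : ℝ → ℝ} (hf : Measurable f) : Measurable (af xbar f) :=
  (hf.abs).indicator measurableSet_Ioc

lemma af_integrable {xbar : ℝ} {f : ℝ → ℝ} (hf : Measurable f)
    (hfI : IntegrableOn f (Icc 0 xbar)) : Integrable (af xbar f) := by
  rw [af, integrable_indicator_iff measurableSet_Ioc]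
  exact (hfI.mono_set Ioc_subset_Icc_self).abs

lemma integral_af (xbar : ℝ) (f : ℝ → ℝ) :
    ∫ t, af xbar f t = ∫ t in Ioc (0:ℝ) xbar, |f t| :=
  integral_indicator measurableSet_Ioc

/-- product of two truncated functions, with a shear -/
noncomputable def T (xbar : ℝ) (f g : ℝ → ℝ) : ℝ × ℝ → ℝ :=
  fun p => af xbar f (p.1 - p.2) * af xbar g p.2

lemma T_nonneg (xbar : ℝ) (f g : ℝ → ℝ) (p : ℝ × ℝ) : 0 ≤ T xbar f g p :=
  mul_nonneg (af_nonneg _ _ _) (af_nonneg _ _ _)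

lemma T_eq_comp (xbar : ℝ) (f g : ℝ → ℝ) :
    T xbar f g = (fun p : ℝ × ℝ => af xbar f p.1 * af xbar g p.2) ∘ shear := rfl

lemma H_integrable {xbar : ℝ} {f g : ℝ → ℝ} (hf : Measurable f) (hg : Measurable g)
    (hfI : IntegrableOn f (Icc 0 xbar)) (hgI : IntegrableOn g (Icc 0 xbar)) :
    Integrable (fun p : ℝ × ℝ => af xbar f p.1 * af xbar g p.2) := by
  rw [Measure.volume_eq_prod]
  exact (af_integrable hf hfI).mul_prod (af_integrable hg hgI)

lemma T_integrable {xbar : ℝ} {f g : ℝ → ℝ} (hf : Measurable f) (hg : Measurable g)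
    (hfI : IntegrableOn f (Icc 0 xbar)) (hgI : IntegrableOn g (Icc 0 xbar)) :
    Integrable (T xbar f g) := by
  rw [T_eq_comp]
  exact (shear_mp.integrable_comp (H_integrable hf hg hfI hgI).aestronglyMeasurable).2
    (H_integrable hf hg hfI hgI)

lemma integral_T {xbar : ℝ} (f g : ℝ → ℝ) :
    ∫ p, T xbar f g p =
      (∫ t in Ioc (0:ℝ) xbar, |f t|) * ∫ t in Ioc (0:ℝ) xbar, |g t| := by
  calc ∫ p, T xbar f g p
      = ∫ p, (fun q : ℝ × ℝ => af xbar f q.1 * af xbar g q.2) (shear p) := rfl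
    _ = ∫ p : ℝ × ℝ, af xbar f p.1 * af xbar g p.2 :=
        shear_mp.integral_comp' (fun q : ℝ × ℝ => af xbar f q.1 * af xbar g q.2)
    _ = _ := by rw [Measure.volume_eq_prod, integral_prod_mul, integral_af, integral_af]



lemma T_sections {xbar : ℝ} {f g : ℝ → ℝ} (hf : Measurable f) (hg : Measurable g)
    (hfI : IntegrableOn f (Icc 0 xbar)) (hgI : IntegrableOn g (Icc 0 xbar)) :
    ∀ᵐ x : ℝ, Integrable (fun y => T xbar f g (x, y)) := by
  have h := T_integrable hf hg hfI hgI
  rw [Measure.volume_eq_prod] at h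
  exact h.prod_right_ae

lemma T_inner_integrable {xbar : ℝ} {f g : ℝ → ℝ} (hf : Measurable f) (hg : Measurable g)
    (hfI : IntegrableOn f (Icc 0 xbar)) (hgI : IntegrableOn g (Icc 0 xbar)) :
    Integrable (fun x => ∫ y, T xbar f g (x, y)) := by
  have h := T_integrable hf hg hfI hgI
  rw [Measure.volume_eq_prod] at h
  exact h.integral_prod_left

lemma T_inner_nonneg (xbar : ℝ) (f g : ℝ → ℝ) (x : ℝ) : 0 ≤ ∫ y, T xbar f g (x, y) :=
  integral_nonneg fun y => T_nonneg _ _ _ _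

lemma integral_T_inner {xbar : ℝ} {f g : ℝ → ℝ} (hf : Measurable f) (hg : Measurable g)
    (hfI : IntegrableOn f (Icc 0 xbar)) (hgI : IntegrableOn g (Icc 0 xbar)) :
    ∫ x, (∫ y, T xbar f g (x, y)) =
      (∫ t in Ioc (0:ℝ) xbar, |f t|) * ∫ t in Ioc (0:ℝ) xbar, |g t| := by
  have h := T_integrable hf hg hfI hgI
  rw [Measure.volume_eq_prod] at h
  rw [← integral_T (xbar := xbar) f g, Measure.volume_eq_prod]
  exact MeasureTheory.integral_integral h

/-- For `x ∈ (0, x̄]`, the section of `T` agrees a.e. with the integrand on `(0, x]`. -/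
lemma T_section_ae {xbar : ℝ} (f g : ℝ → ℝ) {x : ℝ} (hx : x ∈ Ioc (0:ℝ) xbar) :
    (Ioc (0:ℝ) x).indicator (fun y => |f (x - y)| * |g y|) =ᵐ[volume]
      fun y => T xbar f g (x, y) := by
  have hne : ∀ᵐ y : ℝ, y ≠ x := by
    rw [ae_iff]
    simpa using measure_singleton x
  filter_upwards [hne] with y hy
  by_cases h : y ∈ Ioc (0:ℝ) x
  · have hyx : y < x := lt_of_le_of_ne h.2 hy
    have h1 : y ∈ Ioc (0:ℝ) xbar := ⟨h.1, h.2.trans hx.2⟩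
    have h2 : x - y ∈ Ioc (0:ℝ) xbar :=
      ⟨sub_pos.mpr hyx, by linarith [h.1, hx.2]⟩
    rw [Set.indicator_of_mem h]
    simp only [T, af, Set.indicator_of_mem h1, Set.indicator_of_mem h2]
  · rw [Set.indicator_of_notMem h]
    rcases not_and_or.mp h with h' | h'
    · have : y ∉ Ioc (0:ℝ) xbar := fun hc => h' hc.1
      simp only [T, af, Set.indicator_of_notMem this, mul_zero]
    · push_neg at h'
      have : x - y ∉ Ioc (0:ℝ) xbar := by
        intro hc; exact absurd hc.1 (by linarith)
      simp only [T, af, Set.indicator_of_notMem this, zero_mul]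

lemma T_sectionOn_integrable {xbar : ℝ} (f g : ℝ → ℝ) {x : ℝ} (hx : x ∈ Ioc (0:ℝ) xbar)
    (hsec : Integrable (fun y => T xbar f g (x, y))) :
    IntegrableOn (fun y => |f (x - y)| * |g y|) (Ioc (0:ℝ) x) := by
  rw [← MeasureTheory.integrable_indicator_iff measurableSet_Ioc]
  exact hsec.congr (T_section_ae f g hx).symm

lemma T_sectionOn_integral {xbar : ℝ} (f g : ℝ → ℝ) {x : ℝ} (hx : x ∈ Ioc (0:ℝ) xbar) :
    ∫ y in Ioc (0:ℝ) x, |f (x - y)| * |g y| = ∫ y, T xbar f g (x, y) := by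
  rw [← MeasureTheory.integral_indicator measurableSet_Ioc]
  exact integral_congr_ae (T_section_ae f g hx)

end AggLip


end AggLipAux

/-- Local Lipschitz estimate for the aggregation operator on `L¹([0, x̄])`:
`‖A[b] − A[b̃]‖₁ ≤ 3 C₀ ‖k_a‖_∞ ‖b − b̃‖₁`. -/
theorem aggOp_locally_lipschitz
    (xbar : ℝ) (hxbar : 0 < xbar) (K C0 : ℝ) (hK : 0 ≤ K) (hC0 : 0 ≤ C0)
    (ka : ℝ → ℝ → ℝ) (hka_meas : Measurable (Function.uncurry ka))
    (hka : ∀ x ∈ Set.Icc (0 : ℝ) xbar, ∀ y ∈ Set.Icc (0 : ℝ) xbar, |ka x y| ≤ K)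
    (b btil : ℝ → ℝ) (hb : Measurable b) (hbtil : Measurable btil)
    (hbI : IntegrableOn b (Set.Icc 0 xbar)) (hbtilI : IntegrableOn btil (Set.Icc 0 xbar))
    (hbC : (∫ x in (0 : ℝ)..xbar, |b x|) ≤ C0)
    (hbtilC : (∫ x in (0 : ℝ)..xbar, |btil x|) ≤ C0) :
    (∫ x in (0 : ℝ)..xbar, |aggOp xbar ka b x - aggOp xbar ka btil x|) ≤
      3 * C0 * K * ∫ x in (0 : ℝ)..xbar, |b x - btil x| := by
  have hle : (0:ℝ) ≤ xbar := hxbar.le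
  rw [intervalIntegral.integral_of_le hle] at hbC hbtilC
  rw [intervalIntegral.integral_of_le hle, intervalIntegral.integral_of_le hle]
  set I : Set ℝ := Set.Ioc (0:ℝ) xbar with hIdef
  set D : ℝ → ℝ := fun x => b x - btil x with hDdef
  have hgoalD : (∫ x in I, |b x - btil x|) = ∫ x in I, |D x| := rfl
  rw [hgoalD]
  have hDmeas : Measurable D := hb.sub hbtil
  have hDI : IntegrableOn D (Set.Icc 0 xbar) := hbI.sub hbtilI
  have hbI' : IntegrableOn b I := hbI.mono_set Set.Ioc_subset_Icc_self
  have hbtilI' : IntegrableOn btil I := hbtilI.mono_set Set.Ioc_subset_Icc_self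
  have hDI' : IntegrableOn D I := hDI.mono_set Set.Ioc_subset_Icc_self
  set nb := ∫ x in I, |b x| with hnb
  set nt := ∫ x in I, |btil x| with hnt
  set nD := ∫ x in I, |D x| with hnDdef
  have hnb0 : 0 ≤ nb := integral_nonneg fun x => abs_nonneg _
  have hnt0 : 0 ≤ nt := integral_nonneg fun x => abs_nonneg _
  have hnD0 : 0 ≤ nD := integral_nonneg fun x => abs_nonneg _
  set P : ℝ → ℝ := fun x => ∫ y, AggLip.T xbar b D (x, y) with hPdef
  set Q : ℝ → ℝ := fun x => ∫ y, AggLip.T xbar D btil (x, y) with hQdef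
  have hPint : Integrable P := AggLip.T_inner_integrable hb hDmeas hbI hDI
  have hQint : Integrable Q := AggLip.T_inner_integrable hDmeas hbtil hDI hbtilI
  have hPval : ∫ x, P x = nb * nD := AggLip.integral_T_inner hb hDmeas hbI hDI
  have hQval : ∫ x, Q x = nD * nt := AggLip.integral_T_inner hDmeas hbtil hDI hbtilI
  -- outer integrals of ka against a function
  have hJint : ∀ (p : ℝ → ℝ), Measurable p → IntegrableOn p I →
      ∀ x ∈ Set.Icc (0:ℝ) xbar, IntegrableOn (fun y => ka x y * p y) I := by
    intro p hp hpI x hx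
    refine Integrable.mono' (hpI.abs.const_mul K) ?_ ?_
    · exact ((hka_meas.comp (measurable_const.prodMk measurable_id)).mul hp).aestronglyMeasurable
    · rw [ae_restrict_iff' measurableSet_Ioc]
      refine ae_of_all _ fun y hy => ?_
      calc ‖ka x y * p y‖ = |ka x y| * |p y| := by rw [Real.norm_eq_abs, abs_mul]
        _ ≤ K * |p y| :=
          mul_le_mul_of_nonneg_right (hka x hx y ⟨hy.1.le, hy.2⟩) (abs_nonneg _)
  have hJbound : ∀ (p : ℝ → ℝ), Measurable p → IntegrableOn p I →
      ∀ x ∈ Set.Icc (0:ℝ) xbar,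
        |∫ y in I, ka x y * p y| ≤ K * ∫ y in I, |p y| := by
    intro p hp hpI x hx
    rw [← Real.norm_eq_abs]
    calc ‖∫ y in I, ka x y * p y‖ ≤ ∫ y in I, K * |p y| := by
          refine norm_integral_le_of_norm_le (hpI.abs.const_mul K) ?_
          rw [ae_restrict_iff' measurableSet_Ioc]
          refine ae_of_all _ fun y hy => ?_
          calc ‖ka x y * p y‖ = |ka x y| * |p y| := by rw [Real.norm_eq_abs, abs_mul]
            _ ≤ K * |p y| :=
              mul_le_mul_of_nonneg_right (hka x hx y ⟨hy.1.le, hy.2⟩) (abs_nonneg _)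
      _ = K * ∫ y in I, |p y| := MeasureTheory.integral_const_mul _ _
  -- the dominating function
  set g : ℝ → ℝ := fun x => K / 2 * (P x + Q x) + K * nb * |D x| + K * nD * |btil x|
    with hgdef
  have hgint : IntegrableOn g I :=
    ((((hPint.add hQint).const_mul (K/2)).integrableOn.add
      (hDI'.abs.const_mul (K*nb))).add (hbtilI'.abs.const_mul (K*nD)))
  -- the a.e. pointwise bound
  have hbound : ∀ᵐ x ∂(volume.restrict I),
      |aggOp xbar ka b x - aggOp xbar ka btil x| ≤ g x := by
    rw [ae_restrict_iff' measurableSet_Ioc]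
    filter_upwards [AggLip.T_sections hb hb hbI hbI,
      AggLip.T_sections hbtil hbtil hbtilI hbtilI,
      AggLip.T_sections hb hDmeas hbI hDI,
      AggLip.T_sections hDmeas hbtil hDI hbtilI] with x s_bb s_tt s_bD s_Dt hxI
    have hx0 : (0:ℝ) ≤ x := hxI.1.le
    have hxIcc : x ∈ Set.Icc (0:ℝ) xbar := ⟨hx0, hxI.2⟩
    have ibD : IntegrableOn (fun y => |b (x - y)| * |D y|) (Set.Ioc 0 x) :=
      AggLip.T_sectionOn_integrable b D hxI s_bD
    have iDt : IntegrableOn (fun y => |D (x - y)| * |btil y|) (Set.Ioc 0 x) :=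
      AggLip.T_sectionOn_integrable D btil hxI s_Dt
    have aeb : ∀ (p q : ℝ → ℝ), ∀ᵐ y ∂(volume.restrict (Set.Ioc 0 x)),
        ‖ka (x - y) y * p (x - y) * q y‖ ≤ K * (|p (x - y)| * |q y|) := by
      intro p q
      rw [ae_restrict_iff' measurableSet_Ioc]
      refine ae_of_all _ fun y hy => ?_
      have h1 : x - y ∈ Set.Icc (0:ℝ) xbar :=
        ⟨by linarith [hy.2], by linarith [hy.1, hxI.2]⟩
      have h2 : y ∈ Set.Icc (0:ℝ) xbar := ⟨hy.1.le, hy.2.trans hxI.2⟩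
      calc ‖ka (x - y) y * p (x - y) * q y‖ = |ka (x - y) y| * (|p (x - y)| * |q y|) := by
            rw [Real.norm_eq_abs, abs_mul, abs_mul, mul_assoc]
        _ ≤ K * (|p (x - y)| * |q y|) :=
          mul_le_mul_of_nonneg_right (hka _ h1 _ h2)
            (mul_nonneg (abs_nonneg _) (abs_nonneg _))
    have dom : ∀ (p q : ℝ → ℝ), Measurable p → Measurable q →
        IntegrableOn (fun y => |p (x - y)| * |q y|) (Set.Ioc 0 x) →
        IntegrableOn (fun y => ka (x - y) y * p (x - y) * q y) (Set.Ioc 0 x) := by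
      intro p q hp hq hpq
      refine Integrable.mono' (hpq.const_mul K) ?_ (aeb p q)
      exact (((hka_meas.comp ((measurable_const.sub measurable_id).prodMk
        measurable_id)).mul (hp.comp (measurable_const.sub measurable_id))).mul
        hq).aestronglyMeasurable
    have Ibb := dom b b hb hb (AggLip.T_sectionOn_integrable b b hxI s_bb)
    have Itt := dom btil btil hbtil hbtil (AggLip.T_sectionOn_integrable btil btil hxI s_tt)
    have IbD := dom b D hb hDmeas ibD
    have IDt := dom D btil hDmeas hbtil iDt
    have hs1 : |∫ y in Set.Ioc 0 x, ka (x - y) y * b (x - y) * D y| ≤ K * P x := by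
      rw [← Real.norm_eq_abs]
      calc ‖∫ y in Set.Ioc 0 x, ka (x - y) y * b (x - y) * D y‖
          ≤ ∫ y in Set.Ioc 0 x, K * (|b (x - y)| * |D y|) :=
            norm_integral_le_of_norm_le (ibD.const_mul K) (aeb b D)
        _ = K * ∫ y in Set.Ioc 0 x, |b (x - y)| * |D y| := MeasureTheory.integral_const_mul _ _
        _ = K * P x := by rw [AggLip.T_sectionOn_integral b D hxI]
    have hs2 : |∫ y in Set.Ioc 0 x, ka (x - y) y * D (x - y) * btil y| ≤ K * Q x := by
      rw [← Real.norm_eq_abs]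
      calc ‖∫ y in Set.Ioc 0 x, ka (x - y) y * D (x - y) * btil y‖
          ≤ ∫ y in Set.Ioc 0 x, K * (|D (x - y)| * |btil y|) :=
            norm_integral_le_of_norm_le (iDt.const_mul K) (aeb D btil)
        _ = K * ∫ y in Set.Ioc 0 x, |D (x - y)| * |btil y| := MeasureTheory.integral_const_mul _ _
        _ = K * Q x := by rw [AggLip.T_sectionOn_integral D btil hxI]
    have hsplit : (∫ y in Set.Ioc 0 x, ka (x - y) y * b (x - y) * b y)
        - (∫ y in Set.Ioc 0 x, ka (x - y) y * btil (x - y) * btil y)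
        = (∫ y in Set.Ioc 0 x, ka (x - y) y * b (x - y) * D y)
          + ∫ y in Set.Ioc 0 x, ka (x - y) y * D (x - y) * btil y := by
      rw [← integral_sub Ibb Itt, ← integral_add IbD IDt]
      refine integral_congr_ae (ae_of_all _ fun y => ?_)
      simp only [hDdef]
      ring
    have ht1 : |(∫ y in Set.Ioc 0 x, ka (x - y) y * b (x - y) * b y)
        - ∫ y in Set.Ioc 0 x, ka (x - y) y * btil (x - y) * btil y|
        ≤ K * P x + K * Q x := by
      rw [hsplit]
      exact (abs_add_le _ _).trans (add_le_add hs1 hs2)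
    -- second term
    have hJb : |∫ y in I, ka x y * b y| ≤ K * nb := hJbound b hb hbI' x hxIcc
    have hJD : |∫ y in I, ka x y * D y| ≤ K * nD := hJbound D hDmeas hDI' x hxIcc
    have hJsub : (∫ y in I, ka x y * b y) - (∫ y in I, ka x y * btil y)
        = ∫ y in I, ka x y * D y := by
      rw [← integral_sub (hJint b hb hbI' x hxIcc) (hJint btil hbtil hbtilI' x hxIcc)]
      refine integral_congr_ae (ae_of_all _ fun y => ?_)
      simp only [hDdef]
      ring
    have ht2 : |b x * (∫ y in I, ka x y * b y) - btil x * ∫ y in I, ka x y * btil y|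
        ≤ |D x| * (K * nb) + |btil x| * (K * nD) := by
      have hre : b x * (∫ y in I, ka x y * b y) - btil x * (∫ y in I, ka x y * btil y)
          = D x * (∫ y in I, ka x y * b y)
            + btil x * ((∫ y in I, ka x y * b y) - ∫ y in I, ka x y * btil y) := by
        simp only [hDdef]; ring
      rw [hre, hJsub]
      calc |D x * (∫ y in I, ka x y * b y) + btil x * ∫ y in I, ka x y * D y|
          ≤ |D x * ∫ y in I, ka x y * b y| + |btil x * ∫ y in I, ka x y * D y| :=
            abs_add_le _ _
        _ = |D x| * |∫ y in I, ka x y * b y| + |btil x| * |∫ y in I, ka x y * D y| := by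
            rw [abs_mul, abs_mul]
        _ ≤ |D x| * (K * nb) + |btil x| * (K * nD) :=
            add_le_add (mul_le_mul_of_nonneg_left hJb (abs_nonneg _))
              (mul_le_mul_of_nonneg_left hJD (abs_nonneg _))
    -- combine
    have e1 : aggOp xbar ka b x = 1/2 * (∫ y in Set.Ioc 0 x, ka (x - y) y * b (x - y) * b y)
        - b x * ∫ y in I, ka x y * b y := by
      simp only [aggOp]
      rw [intervalIntegral.integral_of_le hx0, intervalIntegral.integral_of_le hle]
    have e2 : aggOp xbar ka btil x
        = 1/2 * (∫ y in Set.Ioc 0 x, ka (x - y) y * btil (x - y) * btil y)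
          - btil x * ∫ y in I, ka x y * btil y := by
      simp only [aggOp]
      rw [intervalIntegral.integral_of_le hx0, intervalIntegral.integral_of_le hle]
    rw [e1, e2]
    have key : (1/2 * (∫ y in Set.Ioc 0 x, ka (x - y) y * b (x - y) * b y)
          - b x * ∫ y in I, ka x y * b y)
        - (1/2 * (∫ y in Set.Ioc 0 x, ka (x - y) y * btil (x - y) * btil y)
          - btil x * ∫ y in I, ka x y * btil y)
        = 1/2 * ((∫ y in Set.Ioc 0 x, ka (x - y) y * b (x - y) * b y)
            - ∫ y in Set.Ioc 0 x, ka (x - y) y * btil (x - y) * btil y)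
          - (b x * (∫ y in I, ka x y * b y)
            - btil x * ∫ y in I, ka x y * btil y) := by ring
    rw [key]
    calc |1/2 * ((∫ y in Set.Ioc 0 x, ka (x - y) y * b (x - y) * b y)
            - ∫ y in Set.Ioc 0 x, ka (x - y) y * btil (x - y) * btil y)
          - (b x * (∫ y in I, ka x y * b y)
            - btil x * ∫ y in I, ka x y * btil y)|
        ≤ |1/2 * ((∫ y in Set.Ioc 0 x, ka (x - y) y * b (x - y) * b y)
            - ∫ y in Set.Ioc 0 x, ka (x - y) y * btil (x - y) * btil y)|
          + |b x * (∫ y in I, ka x y * b y)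
            - btil x * ∫ y in I, ka x y * btil y| := abs_sub _ _
      _ ≤ 1/2 * (K * P x + K * Q x) + (|D x| * (K * nb) + |btil x| * (K * nD)) := by
          refine add_le_add ?_ ht2
          rw [abs_mul]
          have : |(1:ℝ)/2| = 1/2 := by norm_num
          rw [this]
          exact mul_le_mul_of_nonneg_left ht1 (by norm_num)
      _ = g x := by simp only [hgdef]; ring
  -- put everything together
  have hmain : (∫ x in I, |aggOp xbar ka b x - aggOp xbar ka btil x|) ≤ ∫ x in I, g x :=
    integral_mono_of_nonneg (ae_of_all _ fun x => abs_nonneg _) hgint hbound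
  refine hmain.trans ?_
  have hPI : ∫ x in I, P x ≤ nb * nD := by
    rw [← hPval]
    exact setIntegral_le_integral hPint (ae_of_all _ fun x => AggLip.T_inner_nonneg _ _ _ _)
  have hQI : ∫ x in I, Q x ≤ nD * nt := by
    rw [← hQval]
    exact setIntegral_le_integral hQint (ae_of_all _ fun x => AggLip.T_inner_nonneg _ _ _ _)
  have hPI0 : 0 ≤ ∫ x in I, P x :=
    integral_nonneg fun x => AggLip.T_inner_nonneg _ _ _ _
  have hQI0 : 0 ≤ ∫ x in I, Q x :=
    integral_nonneg fun x => AggLip.T_inner_nonneg _ _ _ _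
  have iPQ : Integrable (fun x => P x + Q x) (volume.restrict I) :=
    hPint.integrableOn.add hQint.integrableOn
  have i1 : Integrable (fun x => K / 2 * (P x + Q x)) (volume.restrict I) := iPQ.const_mul _
  have i2 : Integrable (fun x => K * nb * |D x|) (volume.restrict I) := hDI'.abs.const_mul _
  have i3 : Integrable (fun x => K * nD * |btil x|) (volume.restrict I) := hbtilI'.abs.const_mul _
  have i12 : Integrable (fun x => K / 2 * (P x + Q x) + K * nb * |D x|) (volume.restrict I) :=
    i1.add i2
  have hgval : ∫ x in I, g x
      = K / 2 * ((∫ x in I, P x) + ∫ x in I, Q x) + K * nb * nD + K * nD * nt := by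
    simp only [hgdef]
    rw [MeasureTheory.integral_add i12 i3, MeasureTheory.integral_add i1 i2,
      MeasureTheory.integral_const_mul, MeasureTheory.integral_const_mul,
      MeasureTheory.integral_const_mul,
      MeasureTheory.integral_add hPint.integrableOn hQint.integrableOn]
  rw [hgval]
  have f1 : K * (∫ x in I, P x) ≤ K * (C0 * nD) :=
    mul_le_mul_of_nonneg_left
      (hPI.trans (mul_le_mul_of_nonneg_right hbC hnD0)) hK
  have f2 : K * (∫ x in I, Q x) ≤ K * (C0 * nD) := by
    refine mul_le_mul_of_nonneg_left (hQI.trans ?_) hK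
    calc nD * nt ≤ nD * C0 := mul_le_mul_of_nonneg_left hbtilC hnD0
      _ = C0 * nD := mul_comm _ _
  have f3 : K * nb * nD ≤ K * (C0 * nD) := by
    rw [← mul_assoc]
    exact mul_le_mul_of_nonneg_right (mul_le_mul_of_nonneg_left hbC hK) hnD0
  have f4 : K * nD * nt ≤ K * (C0 * nD) := by
    calc K * nD * nt ≤ K * nD * C0 := mul_le_mul_of_nonneg_left hbtilC (mul_nonneg hK hnD0)
      _ = K * (C0 * nD) := by ring
  nlinarith [f1, f2, f3, f4]
end

section
/- Fix x̄ > 0, K ≥ 0, M ≥ 0 and C₀ ≥ 0. Let k_a : ℝ × ℝ → ℝ be measurable with |k_a(x, y)| ≤ K on [0, x̄] × [0, x̄], let μ : ℝ → ℝ be measurable with |μ(x)| ≤ M on [0, x̄], and let b, b̃ : ℝ → ℝ be measurable, integrable on [0, x̄], with ∫₀^{x̄} |b| ≤ C₀ and ∫₀^{x̄} |b̃| ≤ C₀. Define A[p](x) = (1/2)∫₀^{x} k_a(x − y, y) p(x − y) p(y) dy − p(x)∫₀^{x̄} k_a(x, y) p(y) dy and R[p](x) = −μ(x) p(x). Then ∫₀^{x̄}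 |(A[b](x) + R[b](x)) − (A[b̃](x) + R[b̃](x))| dx ≤ (3 C₀ K + M) ∫₀^{x̄} |b(x) − b̃(x)| dx. -/
open MeasureTheory intervalIntegral

/-- The removal operator `R[p](x) = −μ(x) p(x)`. -/
def remOp (μ : ℝ → ℝ) (p : ℝ → ℝ) (x : ℝ) : ℝ := -(μ x) * p x

section AggAux

open Set
open scoped ENNReal

private lemma integral_abs_le_of_lintegral {s : Set ℝ} {f : ℝ → ℝ}
    (hf : AEStronglyMeasurable f (volume.restrict s)) {C : ℝ} (hC : 0 ≤ C)
    (h : ∫⁻ x in s, ENNReal.ofReal |f x| ≤ ENNReal.ofReal C) :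
    ∫ x in s, |f x| ≤ C := by
  have habs : AEStronglyMeasurable (fun x => |f x|) (volume.restrict s) := by
    simpa [Real.norm_eq_abs] using hf.norm
  have hint : Integrable (fun x => |f x|) (volume.restrict s) := by
    refine ⟨habs, ?_⟩
    rw [hasFiniteIntegral_iff_ofReal (ae_of_all _ fun x => abs_nonneg _)]
    exact lt_of_le_of_lt h ENNReal.ofReal_lt_top
  rw [integral_eq_lintegral_of_nonneg_ae (ae_of_all _ fun x => abs_nonneg _) habs]
  exact ENNReal.toReal_le_of_le_ofReal hC h

private lemma lint_abs_eq {s : Set ℝ} {p : ℝ → ℝ} (hpI : IntegrableOn p s) :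
    (∫⁻ x in s, ENNReal.ofReal |p x|) = ENNReal.ofReal (∫ x in s, |p x|) :=
  (ofReal_integral_eq_lintegral_ofReal hpI.abs (ae_of_all _ fun _ => abs_nonneg _)).symm

private lemma triangle_meas {ka : ℝ → ℝ → ℝ} (hka_meas : Measurable (Function.uncurry ka))
    {p q : ℝ → ℝ} (hp : Measurable p) (hq : Measurable q) :
    Measurable (fun z : ℝ × ℝ => ka (z.1 - z.2) z.2 * p (z.1 - z.2) * q z.2) :=
  ((hka_meas.comp ((measurable_fst.sub measurable_snd).prodMk measurable_snd)).mul
    (hp.comp (measurable_fst.sub measurable_snd))).mul (hq.comp measurable_snd)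

private lemma conv_lintegral_le {xbar K : ℝ}
    {ka : ℝ → ℝ → ℝ} (hka_meas : Measurable (Function.uncurry ka))
    (hka : ∀ x ∈ Icc (0:ℝ) xbar, ∀ y ∈ Icc (0:ℝ) xbar, |ka x y| ≤ K)
    {p q : ℝ → ℝ} (hp : Measurable p) (hq : Measurable q) :
    (∫⁻ x in Ioc (0:ℝ) xbar, ∫⁻ y in Ioc (0:ℝ) x,
        ENNReal.ofReal |ka (x - y) y * p (x - y) * q y|)
      ≤ ENNReal.ofReal K * (∫⁻ u in Ioc (0:ℝ) xbar, ENNReal.ofReal |p u|)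
          * (∫⁻ y in Ioc (0:ℝ) xbar, ENNReal.ofReal |q y|) := by
  set g : ℝ → ℝ → ℝ≥0∞ := fun x y => ENNReal.ofReal |ka (x - y) y * p (x - y) * q y| with hg
  have hg_meas : Measurable (fun z : ℝ × ℝ => g z.1 z.2) :=
    (triangle_meas hka_meas hp hq).abs.ennreal_ofReal
  have step1 : (∫⁻ x in Ioc (0:ℝ) xbar, ∫⁻ y in Ioc (0:ℝ) x, g x y)
      = ∫⁻ x in Ioc (0:ℝ) xbar, ∫⁻ y in Ioc (0:ℝ) xbar, (Iic x).indicator (g x) y := by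
    refine setLIntegral_congr_fun_ae measurableSet_Ioc (ae_of_all _ fun x hx => ?_)
    rw [lintegral_indicator measurableSet_Iic, Measure.restrict_restrict measurableSet_Iic]
    rw [show Iic x ∩ Ioc 0 xbar = Ioc 0 x from ?_]
    ext y
    constructor
    · rintro ⟨h2, h1, _⟩; exact ⟨h1, h2⟩
    · rintro ⟨h1, h2⟩; exact ⟨h2, h1, le_trans h2 hx.2⟩
  have hswapmeas : AEMeasurable (fun z : ℝ × ℝ => (Iic z.1).indicator (g z.1) z.2)
      ((volume.restrict (Ioc (0:ℝ) xbar)).prod (volume.restrict (Ioc (0:ℝ) xbar))) := by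
    have h4 : (fun z : ℝ × ℝ => (Iic z.1).indicator (g z.1) z.2)
        = ({z : ℝ × ℝ | z.2 ≤ z.1}).indicator (fun z => g z.1 z.2) := by
      ext z; simp [Set.indicator_apply, mem_Iic]
    rw [h4]
    exact (Measurable.indicator hg_meas
      (measurableSet_le measurable_snd measurable_fst)).aemeasurable
  have step2 : (∫⁻ x in Ioc (0:ℝ) xbar, ∫⁻ y in Ioc (0:ℝ) xbar, (Iic x).indicator (g x) y)
      = ∫⁻ y in Ioc (0:ℝ) xbar, ∫⁻ x in Ioc (0:ℝ) xbar, (Iic x).indicator (g x) y :=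
    lintegral_lintegral_swap hswapmeas
  have step3 : ∀ y ∈ Ioc (0:ℝ) xbar,
      (∫⁻ x in Ioc (0:ℝ) xbar, (Iic x).indicator (g x) y)
        = ∫⁻ x in Icc y xbar, g x y := by
    intro y hy
    have h5 : (fun x => (Iic x).indicator (g x) y) = (Ici y).indicator (fun x => g x y) := by
      ext x; simp only [Set.indicator_apply, mem_Iic, mem_Ici]
    rw [h5, lintegral_indicator measurableSet_Ici, Measure.restrict_restrict measurableSet_Ici]
    rw [show Ici y ∩ Ioc 0 xbar = Icc y xbar from ?_]
    ext x
    constructor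
    · rintro ⟨h1, h2⟩; exact ⟨h1, h2.2⟩
    · rintro ⟨h1, h2⟩; exact ⟨h1, lt_of_lt_of_le hy.1 h1, h2⟩
  set Lp := ∫⁻ u in Ioc (0:ℝ) xbar, ENNReal.ofReal |p u| with hLp
  have step4 : ∀ y ∈ Ioc (0:ℝ) xbar,
      (∫⁻ x in Icc y xbar, g x y) ≤ ENNReal.ofReal K * Lp * ENNReal.ofReal |q y| := by
    intro y hy
    have hbound : ∀ x ∈ Icc y xbar,
        g x y ≤ ENNReal.ofReal K * ENNReal.ofReal |p (x - y)| * ENNReal.ofReal |q y| := by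
      intro x hx
      rw [hg]
      simp only
      rw [abs_mul, abs_mul, ENNReal.ofReal_mul (by positivity), ENNReal.ofReal_mul (abs_nonneg _)]
      refine mul_le_mul_left (mul_le_mul_left (ENNReal.ofReal_le_ofReal ?_) _) _
      exact hka _ ⟨by linarith [hy.1, hx.1], by linarith [hy.1, hx.2]⟩ y ⟨hy.1.le, hy.2⟩
    have htrans : (∫⁻ x in Icc y xbar, ENNReal.ofReal |p (x - y)|)
        = ∫⁻ u in Icc (0:ℝ) (xbar - y), ENNReal.ofReal |p u| := by
      rw [← lintegral_indicator measurableSet_Icc, ← lintegral_indicator measurableSet_Icc,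
        ← lintegral_add_right_eq_self (μ := volume)
          ((Icc y xbar).indicator fun x => ENNReal.ofReal |p (x - y)|) y]
      congr 1
      ext x
      rw [Set.indicator_apply, Set.indicator_apply]
      have hmem : (x + y ∈ Icc y xbar) ↔ (x ∈ Icc 0 (xbar - y)) := by
        simp only [mem_Icc]
        constructor
        · rintro ⟨h1, h2⟩; exact ⟨by linarith, by linarith⟩
        · rintro ⟨h1, h2⟩; exact ⟨by linarith, by linarith⟩
      simp only [add_sub_cancel_right]
      rw [if_congr hmem rfl rfl]
    have htrans2 : (∫⁻ x in Icc y xbar, ENNReal.ofReal |p (x - y)|) ≤ Lp := by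
      rw [htrans, hLp, show (volume.restrict (Ioc (0:ℝ) xbar))
          = volume.restrict (Icc (0:ℝ) xbar) from Measure.restrict_congr_set Ioc_ae_eq_Icc]
      exact lintegral_mono_set (Icc_subset_Icc_right (by linarith [hy.1]))
    calc ∫⁻ x in Icc y xbar, g x y
        ≤ ∫⁻ x in Icc y xbar,
            ENNReal.ofReal K * ENNReal.ofReal |p (x - y)| * ENNReal.ofReal |q y| :=
          setLIntegral_mono' measurableSet_Icc hbound
      _ = (∫⁻ x in Icc y xbar, ENNReal.ofReal K * ENNReal.ofReal |p (x - y)|)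
            * ENNReal.ofReal |q y| := lintegral_mul_const' _ _ ENNReal.ofReal_ne_top
      _ = ENNReal.ofReal K * (∫⁻ x in Icc y xbar, ENNReal.ofReal |p (x - y)|)
            * ENNReal.ofReal |q y| := by
          rw [lintegral_const_mul' _ _ ENNReal.ofReal_ne_top]
      _ ≤ ENNReal.ofReal K * Lp * ENNReal.ofReal |q y| :=
          mul_le_mul_left (mul_le_mul_right htrans2 _) _
  calc (∫⁻ x in Ioc (0:ℝ) xbar, ∫⁻ y in Ioc (0:ℝ) x, g x y)
      = ∫⁻ y in Ioc (0:ℝ) xbar, ∫⁻ x in Ioc (0:ℝ) xbar, (Iic x).indicator (g x) y := by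
        rw [step1, step2]
    _ = ∫⁻ y in Ioc (0:ℝ) xbar, ∫⁻ x in Icc y xbar, g x y :=
        setLIntegral_congr_fun_ae measurableSet_Ioc (ae_of_all _ step3)
    _ ≤ ∫⁻ y in Ioc (0:ℝ) xbar, ENNReal.ofReal K * Lp * ENNReal.ofReal |q y| :=
        setLIntegral_mono' measurableSet_Ioc step4
    _ = ENNReal.ofReal K * Lp * ∫⁻ y in Ioc (0:ℝ) xbar, ENNReal.ofReal |q y| :=
        lintegral_const_mul _ (hq.abs.ennreal_ofReal)

private lemma slice_integrable {xbar K : ℝ}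
    {ka : ℝ → ℝ → ℝ} (hka_meas : Measurable (Function.uncurry ka))
    (hka : ∀ x ∈ Icc (0:ℝ) xbar, ∀ y ∈ Icc (0:ℝ) xbar, |ka x y| ≤ K)
    {p q : ℝ → ℝ} (hp : Measurable p) (hq : Measurable q)
    (hpI : IntegrableOn p (Ioc 0 xbar)) (hqI : IntegrableOn q (Ioc 0 xbar)) :
    ∀ᵐ x ∂(volume.restrict (Ioc (0:ℝ) xbar)),
      IntegrableOn (fun y => ka (x - y) y * p (x - y) * q y) (Ioc 0 x) := by
  set Φ : ℝ × ℝ → ℝ :=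
    fun z => ((Ioc 0 z.1).indicator (fun y => ka (z.1 - y) y * p (z.1 - y) * q y)) z.2 with hΦ
  have hmeasprod : Measurable Φ := by
    have h2 : Φ = ({z : ℝ × ℝ | 0 < z.2 ∧ z.2 ≤ z.1}).indicator
        (fun z => ka (z.1 - z.2) z.2 * p (z.1 - z.2) * q z.2) := by
      ext z; simp [hΦ, Set.indicator_apply, mem_Ioc]
    rw [h2]
    exact (triangle_meas hka_meas hp hq).indicator
      ((measurableSet_lt measurable_const measurable_snd).inter
        (measurableSet_le measurable_snd measurable_fst))
  have hint : Integrable Φ ((volume.restrict (Ioc (0:ℝ) xbar)).prod volume) := by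
    refine ⟨hmeasprod.aestronglyMeasurable, ?_⟩
    have heq : (∫⁻ z, ‖Φ z‖ₑ ∂((volume.restrict (Ioc (0:ℝ) xbar)).prod volume))
        = ∫⁻ x in Ioc (0:ℝ) xbar, ∫⁻ y in Ioc (0:ℝ) x,
            ENNReal.ofReal |ka (x - y) y * p (x - y) * q y| := by
      rw [lintegral_prod _ hmeasprod.enorm.aemeasurable]
      refine setLIntegral_congr_fun_ae measurableSet_Ioc (ae_of_all _ fun x _ => ?_)
      rw [← lintegral_indicator measurableSet_Ioc]
      congr 1
      ext y
      simp only [hΦ, Set.indicator_apply, mem_Ioc]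
      split_ifs
      · exact Real.enorm_eq_ofReal_abs _
      · simp
    rw [HasFiniteIntegral, heq]
    refine lt_of_le_of_lt (conv_lintegral_le hka_meas hka hp hq) ?_
    rw [lint_abs_eq hpI, lint_abs_eq hqI]
    exact ENNReal.mul_lt_top (ENNReal.mul_lt_top ENNReal.ofReal_lt_top
      ENNReal.ofReal_lt_top) ENNReal.ofReal_lt_top
  filter_upwards [hint.prod_right_ae] with x hx
  have heq2 : (fun y => Φ (x, y))
      = (Ioc (0:ℝ) x).indicator (fun y => ka (x - y) y * p (x - y) * q y) := rfl
  rw [heq2, integrable_indicator_iff measurableSet_Ioc] at hx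
  exact hx

private lemma J_integrable {xbar K : ℝ}
    {ka : ℝ → ℝ → ℝ} (hka_meas : Measurable (Function.uncurry ka))
    (hka : ∀ x ∈ Icc (0:ℝ) xbar, ∀ y ∈ Icc (0:ℝ) xbar, |ka x y| ≤ K)
    {p : ℝ → ℝ} (hpI : IntegrableOn p (Ioc 0 xbar))
    {x : ℝ} (hx : x ∈ Icc (0:ℝ) xbar) :
    IntegrableOn (fun y => ka x y * p y) (Ioc 0 xbar) := by
  refine Integrable.bdd_mul (c := K) hpI
    ((hka_meas.comp (measurable_const.prodMk measurable_id)).aestronglyMeasurable) ?_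
  rw [ae_restrict_iff' measurableSet_Ioc]
  exact ae_of_all _ fun y hy => by
    simpa [Real.norm_eq_abs] using hka x hx y ⟨hy.1.le, hy.2⟩

private lemma J_bound {xbar K C0 : ℝ} (hK : 0 ≤ K)
    {ka : ℝ → ℝ → ℝ} (hka_meas : Measurable (Function.uncurry ka))
    (hka : ∀ x ∈ Icc (0:ℝ) xbar, ∀ y ∈ Icc (0:ℝ) xbar, |ka x y| ≤ K)
    {p : ℝ → ℝ} (hpI : IntegrableOn p (Ioc 0 xbar))
    (hpC : (∫ y in Ioc (0:ℝ) xbar, |p y|) ≤ C0)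
    {x : ℝ} (hx : x ∈ Icc (0:ℝ) xbar) :
    |∫ y in Ioc (0:ℝ) xbar, ka x y * p y| ≤ K * C0 := by
  have h1 : |∫ y in Ioc (0:ℝ) xbar, ka x y * p y|
      ≤ ∫ y in Ioc (0:ℝ) xbar, |ka x y * p y| := by
    simpa only [Real.norm_eq_abs] using
      norm_integral_le_integral_norm (μ := volume.restrict (Ioc (0:ℝ) xbar))
        (fun y => ka x y * p y)
  calc |∫ y in Ioc (0:ℝ) xbar, ka x y * p y|
      ≤ ∫ y in Ioc (0:ℝ) xbar, |ka x y * p y| := h1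
    _ ≤ ∫ y in Ioc (0:ℝ) xbar, K * |p y| :=
        setIntegral_mono_on ((J_integrable hka_meas hka hpI hx).abs)
          (hpI.abs.const_mul K) measurableSet_Ioc (fun y hy => by
            rw [abs_mul]
            exact mul_le_mul_of_nonneg_right (hka x hx y ⟨hy.1.le, hy.2⟩) (abs_nonneg _))
    _ = K * ∫ y in Ioc (0:ℝ) xbar, |p y| := integral_const_mul K _
    _ ≤ K * C0 := mul_le_mul_of_nonneg_left hpC hK

private lemma aggOp_aesm {xbar : ℝ} (hxbar : 0 < xbar) {ka : ℝ → ℝ → ℝ}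
    (hka_meas : Measurable (Function.uncurry ka)) {p : ℝ → ℝ} (hp : Measurable p) :
    AEStronglyMeasurable (aggOp xbar ka p) (volume.restrict (Ioc (0:ℝ) xbar)) := by
  set V : ℝ × ℝ → ℝ :=
    fun z => ((Ioc 0 z.1).indicator (fun y => ka (z.1 - y) y * p (z.1 - y) * p y)) z.2 with hV
  have hVmeas : Measurable V := by
    have h2 : V = ({z : ℝ × ℝ | 0 < z.2 ∧ z.2 ≤ z.1}).indicator
        (fun z => ka (z.1 - z.2) z.2 * p (z.1 - z.2) * p z.2) := by
      ext z; simp [hV, Set.indicator_apply, mem_Ioc]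
    rw [h2]
    exact (triangle_meas hka_meas hp hp).indicator
      ((measurableSet_lt measurable_const measurable_snd).inter
        (measurableSet_le measurable_snd measurable_fst))
  have h1 : StronglyMeasurable (fun x => ∫ y, V (x, y)) :=
    hVmeas.stronglyMeasurable.integral_prod_right'
  have hWmeas : Measurable (fun z : ℝ × ℝ =>
      ((Ioc (0:ℝ) xbar).indicator (fun y => ka z.1 y * p y)) z.2) := by
    have h3 : (fun z : ℝ × ℝ => ((Ioc (0:ℝ) xbar).indicator (fun y => ka z.1 y * p y)) z.2)
        = ({z : ℝ × ℝ | z.2 ∈ Ioc (0:ℝ) xbar}).indicator (fun z => ka z.1 z.2 * p z.2) := by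
      ext z; simp [Set.indicator_apply]
    rw [h3]
    exact ((hka_meas.comp (measurable_fst.prodMk measurable_snd)).mul
      (hp.comp measurable_snd)).indicator (measurable_snd measurableSet_Ioc)
  have h2 : StronglyMeasurable (fun x => ∫ y,
      ((Ioc (0:ℝ) xbar).indicator (fun y => ka x y * p y)) y) :=
    hWmeas.stronglyMeasurable.integral_prod_right'
  refine AEStronglyMeasurable.congr
    (f := fun x => (1/2 : ℝ) * (∫ y, V (x, y))
      - p x * ∫ y, ((Ioc (0:ℝ) xbar).indicator (fun y => ka x y * p y)) y) ?_ ?_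
  · exact ((h1.measurable.const_mul ((1:ℝ)/2)).sub
      (hp.mul h2.measurable)).aestronglyMeasurable
  · rw [Filter.EventuallyEq, ae_restrict_iff' measurableSet_Ioc]
    refine ae_of_all _ fun x hx => ?_
    have e1 : (∫ y, V (x, y)) = ∫ y in (0:ℝ)..x, ka (x - y) y * p (x - y) * p y := by
      rw [intervalIntegral.integral_of_le hx.1.le,
        ← MeasureTheory.integral_indicator measurableSet_Ioc]
    have e2 : (∫ y, ((Ioc (0:ℝ) xbar).indicator (fun y => ka x y * p y)) y)
        = ∫ y in (0:ℝ)..xbar, ka x y * p y := by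
      rw [intervalIntegral.integral_of_le hxbar.le,
        ← MeasureTheory.integral_indicator measurableSet_Ioc]
    rw [aggOp, e1, e2]

private lemma U_meas {ka : ℝ → ℝ → ℝ} (hka_meas : Measurable (Function.uncurry ka))
    {p q : ℝ → ℝ} (hp : Measurable p) (hq : Measurable q) :
    Measurable (fun z : ℝ × ℝ => (Ioc (0:ℝ) z.1).indicator
      (fun y => ENNReal.ofReal |ka (z.1 - y) y * p (z.1 - y) * q y|) z.2) := by
  have h2 : (fun z : ℝ × ℝ => (Ioc (0:ℝ) z.1).indicator
      (fun y => ENNReal.ofReal |ka (z.1 - y) y * p (z.1 - y) * q y|) z.2)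
      = ({z : ℝ × ℝ | 0 < z.2 ∧ z.2 ≤ z.1}).indicator
        (fun z => ENNReal.ofReal |ka (z.1 - z.2) z.2 * p (z.1 - z.2) * q z.2|) := by
    ext z; simp [Set.indicator_apply, mem_Ioc]
  rw [h2]
  exact ((triangle_meas hka_meas hp hq).abs.ennreal_ofReal).indicator
    ((measurableSet_lt measurable_const measurable_snd).inter
      (measurableSet_le measurable_snd measurable_fst))

private lemma abs_comb {A1 A2 B C r1 r2 sB sC : ℝ} (h1 : |A1| ≤ r1) (h2 : |A2| ≤ r2)
    (h3 : |B| ≤ sB) (h4 : |C| ≤ sC) :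
    |1/2 * (A1 + A2) - B - C| ≤ 1/2 * r1 + 1/2 * r2 + sB + sC := by
  have k1 : |1/2 * (A1 + A2) - B - C| ≤ |1/2 * (A1 + A2)| + |B| + |C| := by
    calc |1/2 * (A1 + A2) - B - C| ≤ |1/2 * (A1 + A2) - B| + |C| := abs_sub _ _
      _ ≤ |1/2 * (A1 + A2)| + |B| + |C| := by linarith [abs_sub (1/2 * (A1 + A2)) B]
  have k2 : |1/2 * (A1 + A2)| ≤ 1/2 * r1 + 1/2 * r2 := by
    rw [abs_mul, abs_of_nonneg (by norm_num : (0:ℝ) ≤ 1/2)]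
    have := abs_add_le A1 A2
    linarith
  linarith

private lemma ofReal_sum5_le {a b c d e : ℝ} {A B C D E : ℝ≥0∞}
    (ha : ENNReal.ofReal a ≤ A) (hb : ENNReal.ofReal b ≤ B) (hc : ENNReal.ofReal c ≤ C)
    (hd : ENNReal.ofReal d ≤ D) (he : ENNReal.ofReal e ≤ E) :
    ENNReal.ofReal (a + b + c + d + e) ≤ A + B + C + D + E := by
  calc ENNReal.ofReal (a + b + c + d + e)
      ≤ ENNReal.ofReal (a + b + c + d) + ENNReal.ofReal e := ENNReal.ofReal_add_le
    _ ≤ (ENNReal.ofReal (a + b + c) + ENNReal.ofReal d) + ENNReal.ofReal e :=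
        add_le_add_left ENNReal.ofReal_add_le _
    _ ≤ ((ENNReal.ofReal (a + b) + ENNReal.ofReal c) + ENNReal.ofReal d) + ENNReal.ofReal e :=
        add_le_add_left (add_le_add_left ENNReal.ofReal_add_le _) _
    _ ≤ (((ENNReal.ofReal a + ENNReal.ofReal b) + ENNReal.ofReal c) + ENNReal.ofReal d)
          + ENNReal.ofReal e :=
        add_le_add_left (add_le_add_left (add_le_add_left ENNReal.ofReal_add_le _) _) _
    _ ≤ A + B + C + D + E :=
        add_le_add (add_le_add (add_le_add (add_le_add ha hb) hc) hd) he

private lemma final_arith {K C0 D M : ℝ} (hK : 0 ≤ K) (hC0 : 0 ≤ C0) (hD : 0 ≤ D)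
    (hM : 0 ≤ M) :
    ENNReal.ofReal (1/2) * (ENNReal.ofReal K * ENNReal.ofReal C0 * ENNReal.ofReal D)
      + ENNReal.ofReal (1/2) * (ENNReal.ofReal K * ENNReal.ofReal D * ENNReal.ofReal C0)
      + ENNReal.ofReal (K * C0) * ENNReal.ofReal D
      + ENNReal.ofReal (K * D) * ENNReal.ofReal C0
      + ENNReal.ofReal M * ENNReal.ofReal D
      = ENNReal.ofReal ((3 * C0 * K + M) * D) := by
  rw [← ENNReal.ofReal_mul hK, ← ENNReal.ofReal_mul (mul_nonneg hK hC0),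
    ← ENNReal.ofReal_mul (by norm_num : (0:ℝ) ≤ 1/2),
    ← ENNReal.ofReal_mul hK, ← ENNReal.ofReal_mul (mul_nonneg hK hD),
    ← ENNReal.ofReal_mul (by norm_num : (0:ℝ) ≤ 1/2),
    ← ENNReal.ofReal_mul hM]
  have nKCD : (0:ℝ) ≤ K * C0 * D := mul_nonneg (mul_nonneg hK hC0) hD
  have nKDC : (0:ℝ) ≤ K * D * C0 := mul_nonneg (mul_nonneg hK hD) hC0
  have nMD : (0:ℝ) ≤ M * D := mul_nonneg hM hD
  have n1 : (0:ℝ) ≤ 1/2 * (K * C0 * D) := mul_nonneg (by norm_num) nKCD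
  have n2 : (0:ℝ) ≤ 1/2 * (K * D * C0) := mul_nonneg (by norm_num) nKDC
  rw [← ENNReal.ofReal_add n1 n2, ← ENNReal.ofReal_add (add_nonneg n1 n2) nKCD,
    ← ENNReal.ofReal_add (add_nonneg (add_nonneg n1 n2) nKCD) nKDC,
    ← ENNReal.ofReal_add (add_nonneg (add_nonneg (add_nonneg n1 n2) nKCD) nKDC) nMD]
  exact congrArg _ (by ring)

end AggAux

section MainProof

open Set
open scoped ENNReal

set_option maxHeartbeats 2000000 in
/-- Local Lipschitz estimate for the aggregation-plus-removal operator on `L¹([0, x̄])`: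
`‖(A + R)[b] − (A + R)[b̃]‖₁ ≤ (3 C₀ ‖k_a‖_∞ + ‖μ‖_∞) ‖b − b̃‖₁`. -/
theorem aggOp_add_remOp_locally_lipschitz
    (xbar : ℝ) (hxbar : 0 < xbar) (K M C0 : ℝ) (hK : 0 ≤ K) (hM : 0 ≤ M) (hC0 : 0 ≤ C0)
    (ka : ℝ → ℝ → ℝ) (hka_meas : Measurable (Function.uncurry ka))
    (hka : ∀ x ∈ Set.Icc (0 : ℝ) xbar, ∀ y ∈ Set.Icc (0 : ℝ) xbar, |ka x y| ≤ K)
    (μ : ℝ → ℝ) (hμ_meas : Measurable μ) (hμ : ∀ x ∈ Set.Icc (0 : ℝ) xbar, |μ x| ≤ M)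
    (b btil : ℝ → ℝ) (hb : Measurable b) (hbtil : Measurable btil)
    (hbI : IntegrableOn b (Set.Icc 0 xbar)) (hbtilI : IntegrableOn btil (Set.Icc 0 xbar))
    (hbC : (∫ x in (0 : ℝ)..xbar, |b x|) ≤ C0)
    (hbtilC : (∫ x in (0 : ℝ)..xbar, |btil x|) ≤ C0) :
    (∫ x in (0 : ℝ)..xbar,
        |(aggOp xbar ka b x + remOp μ b x) - (aggOp xbar ka btil x + remOp μ btil x)|) ≤
      (3 * C0 * K + M) * ∫ x in (0 : ℝ)..xbar, |b x - btil x| := by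
  have hdm : Measurable (fun x => b x - btil x) := hb.sub hbtil
  have hbI' : IntegrableOn b (Ioc 0 xbar) := hbI.mono_set Ioc_subset_Icc_self
  have hbtilI' : IntegrableOn btil (Ioc 0 xbar) := hbtilI.mono_set Ioc_subset_Icc_self
  have hdI' : IntegrableOn (fun x => b x - btil x) (Ioc 0 xbar) := hbI'.sub hbtilI'
  have hbC' : (∫ x in Ioc (0:ℝ) xbar, |b x|) ≤ C0 := by
    rwa [intervalIntegral.integral_of_le hxbar.le] at hbC
  have hbtilC' : (∫ x in Ioc (0:ℝ) xbar, |btil x|) ≤ C0 := by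
    rwa [intervalIntegral.integral_of_le hxbar.le] at hbtilC
  rw [intervalIntegral.integral_of_le hxbar.le, intervalIntegral.integral_of_le hxbar.le]
  set D : ℝ := ∫ x in Ioc (0:ℝ) xbar, |b x - btil x| with hDdef
  have hD0 : 0 ≤ D := setIntegral_nonneg measurableSet_Ioc fun x _ => abs_nonneg _
  have hdC : (∫ x in Ioc (0:ℝ) xbar, |b x - btil x|) ≤ D := le_of_eq hDdef.symm
  refine integral_abs_le_of_lintegral ?_ ?_ ?_
  · exact ((aggOp_aesm hxbar hka_meas hb).add
        ((hμ_meas.neg.mul hb).aestronglyMeasurable)).sub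
      ((aggOp_aesm hxbar hka_meas hbtil).add
        ((hμ_meas.neg.mul hbtil).aestronglyMeasurable))
  · have : (0:ℝ) ≤ 3 * C0 * K + M :=
      add_nonneg (mul_nonneg (mul_nonneg (by norm_num) hC0) hK) hM
    exact mul_nonneg this hD0
  -- main lintegral bound
  have hLb : (∫⁻ x in Ioc (0:ℝ) xbar, ENNReal.ofReal |b x|) ≤ ENNReal.ofReal C0 := by
    rw [lint_abs_eq hbI']; exact ENNReal.ofReal_le_ofReal hbC'
  have hLbtil : (∫⁻ x in Ioc (0:ℝ) xbar, ENNReal.ofReal |btil x|) ≤ ENNReal.ofReal C0 := by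
    rw [lint_abs_eq hbtilI']; exact ENNReal.ofReal_le_ofReal hbtilC'
  have hLd : (∫⁻ x in Ioc (0:ℝ) xbar, ENNReal.ofReal |b x - btil x|) = ENNReal.ofReal D :=
    lint_abs_eq hdI'
  set U1 : ℝ × ℝ → ℝ≥0∞ := fun z => (Ioc (0:ℝ) z.1).indicator
    (fun y => ENNReal.ofReal |ka (z.1 - y) y * b (z.1 - y) * (b y - btil y)|) z.2 with hU1
  set U2 : ℝ × ℝ → ℝ≥0∞ := fun z => (Ioc (0:ℝ) z.1).indicator
    (fun y => ENNReal.ofReal |ka (z.1 - y) y * (b (z.1 - y) - btil (z.1 - y)) * btil y|) z.2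
    with hU2
  have hU1m : Measurable U1 := U_meas hka_meas hb hdm
  have hU2m : Measurable U2 := U_meas hka_meas hdm hbtil
  set F : ℝ → ℝ≥0∞ := fun x =>
    ENNReal.ofReal (1/2) * (∫⁻ y, U1 (x, y))
      + ENNReal.ofReal (1/2) * (∫⁻ y, U2 (x, y))
      + ENNReal.ofReal (K * C0) * ENNReal.ofReal |b x - btil x|
      + ENNReal.ofReal (K * D) * ENNReal.ofReal |btil x|
      + ENNReal.ofReal M * ENNReal.ofReal |b x - btil x| with hF
  have hbound : ∀ᵐ x ∂(volume.restrict (Ioc (0:ℝ) xbar)),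
      ENNReal.ofReal |(aggOp xbar ka b x + remOp μ b x)
        - (aggOp xbar ka btil x + remOp μ btil x)| ≤ F x := by
    filter_upwards [slice_integrable hka_meas hka hb hb hbI' hbI',
      slice_integrable hka_meas hka hbtil hbtil hbtilI' hbtilI',
      slice_integrable hka_meas hka hb hdm hbI' hdI',
      slice_integrable hka_meas hka hdm hbtil hdI' hbtilI',
      ae_restrict_mem measurableSet_Ioc] with x h1 h2 h3 h4 hx
    have hx0 : (0:ℝ) ≤ x := hx.1.le
    have hxm : x ∈ Icc (0:ℝ) xbar := ⟨hx.1.le, hx.2⟩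
    have hJb := J_integrable hka_meas hka hbI' hxm
    have hJbtil := J_integrable hka_meas hka hbtilI' hxm
    have hJd : IntegrableOn (fun y => ka x y * (b y - btil y)) (Ioc 0 xbar) :=
      (hJb.sub hJbtil).congr (ae_of_all _ fun y => by simp only [Pi.sub_apply]; ring)
    have hJbB : |∫ y in Ioc (0:ℝ) xbar, ka x y * b y| ≤ K * C0 :=
      J_bound hK hka_meas hka hbI' hbC' hxm
    have hJdB : |∫ y in Ioc (0:ℝ) xbar, ka x y * (b y - btil y)| ≤ K * D :=
      J_bound hK hka_meas hka hdI' hdC hxm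
    have hμx : |μ x| ≤ M := hμ x hxm
    -- identities
    have hIeq : (∫ y in (0:ℝ)..x, ka (x - y) y * b (x - y) * b y)
        - (∫ y in (0:ℝ)..x, ka (x - y) y * btil (x - y) * btil y)
        = (∫ y in Ioc (0:ℝ) x, ka (x - y) y * b (x - y) * (b y - btil y))
          + (∫ y in Ioc (0:ℝ) x, ka (x - y) y * (b (x - y) - btil (x - y)) * btil y) := by
      rw [intervalIntegral.integral_of_le hx0, intervalIntegral.integral_of_le hx0,
        ← integral_sub h1 h2, ← integral_add h3 h4]
      exact integral_congr_ae (ae_of_all _ fun y => by ring)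
    have hJsub : (∫ y in Ioc (0:ℝ) xbar, ka x y * (b y - btil y))
        = (∫ y in Ioc (0:ℝ) xbar, ka x y * b y)
          - ∫ y in Ioc (0:ℝ) xbar, ka x y * btil y := by
      rw [← integral_sub hJb hJbtil]
      exact integral_congr_ae (ae_of_all _ fun y => by ring)
    have hJeq : b x * (∫ y in (0:ℝ)..xbar, ka x y * b y)
        - btil x * (∫ y in (0:ℝ)..xbar, ka x y * btil y)
        = (b x - btil x) * (∫ y in Ioc (0:ℝ) xbar, ka x y * b y)
          + btil x * (∫ y in Ioc (0:ℝ) xbar, ka x y * (b y - btil y)) := by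
      rw [intervalIntegral.integral_of_le hxbar.le, intervalIntegral.integral_of_le hxbar.le,
        hJsub]
      ring
    have hX : (aggOp xbar ka b x + remOp μ b x) - (aggOp xbar ka btil x + remOp μ btil x)
        = 1/2 * ((∫ y in Ioc (0:ℝ) x, ka (x - y) y * b (x - y) * (b y - btil y))
            + (∫ y in Ioc (0:ℝ) x, ka (x - y) y * (b (x - y) - btil (x - y)) * btil y))
          - ((b x - btil x) * (∫ y in Ioc (0:ℝ) xbar, ka x y * b y)
            + btil x * (∫ y in Ioc (0:ℝ) xbar, ka x y * (b y - btil y)))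
          - μ x * (b x - btil x) := by
      rw [aggOp, aggOp, remOp, remOp, ← hIeq, ← hJeq]
      ring
    -- absolute value bound
    have habsI1 : |∫ y in Ioc (0:ℝ) x, ka (x - y) y * b (x - y) * (b y - btil y)|
        ≤ ∫ y in Ioc (0:ℝ) x, |ka (x - y) y * b (x - y) * (b y - btil y)| := by
      simpa only [Real.norm_eq_abs] using
        norm_integral_le_integral_norm (μ := volume.restrict (Ioc (0:ℝ) x))
          (fun y => ka (x - y) y * b (x - y) * (b y - btil y))
    have habsI2 : |∫ y in Ioc (0:ℝ) x, ka (x - y) y * (b (x - y) - btil (x - y)) * btil y|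
        ≤ ∫ y in Ioc (0:ℝ) x, |ka (x - y) y * (b (x - y) - btil (x - y)) * btil y| := by
      simpa only [Real.norm_eq_abs] using
        norm_integral_le_integral_norm (μ := volume.restrict (Ioc (0:ℝ) x))
          (fun y => ka (x - y) y * (b (x - y) - btil (x - y)) * btil y)
    have hBsum : |(b x - btil x) * (∫ y in Ioc (0:ℝ) xbar, ka x y * b y)
          + btil x * (∫ y in Ioc (0:ℝ) xbar, ka x y * (b y - btil y))|
        ≤ (K * C0) * |b x - btil x| + (K * D) * |btil x| := by
      refine (abs_add_le _ _).trans ?_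
      rw [abs_mul, abs_mul]
      have t1 := mul_le_mul_of_nonneg_left hJbB (abs_nonneg (b x - btil x))
      have t2 := mul_le_mul_of_nonneg_left hJdB (abs_nonneg (btil x))
      rw [mul_comm (K * C0) _, mul_comm (K * D) _]
      linarith
    have hCabs : |μ x * (b x - btil x)| ≤ M * |b x - btil x| := by
      rw [abs_mul]
      exact mul_le_mul_of_nonneg_right hμx (abs_nonneg _)
    have habs : |(aggOp xbar ka b x + remOp μ b x)
          - (aggOp xbar ka btil x + remOp μ btil x)|
        ≤ 1/2 * (∫ y in Ioc (0:ℝ) x, |ka (x - y) y * b (x - y) * (b y - btil y)|)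
          + 1/2 * (∫ y in Ioc (0:ℝ) x, |ka (x - y) y * (b (x - y) - btil (x - y)) * btil y|)
          + (K * C0) * |b x - btil x| + (K * D) * |btil x| + M * |b x - btil x| := by
      rw [hX]
      refine le_trans (abs_comb habsI1 habsI2 hBsum hCabs) (le_of_eq (by ring))
    refine le_trans (ENNReal.ofReal_le_ofReal habs) ?_
    simp only [hF]
    refine ofReal_sum5_le (le_of_eq ?_) (le_of_eq ?_) (le_of_eq ?_) (le_of_eq ?_) (le_of_eq ?_)
    · rw [ENNReal.ofReal_mul (by norm_num : (0:ℝ) ≤ 1/2)]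
      congr 1
      rw [show (∫⁻ y, U1 (x, y)) = ∫⁻ y in Ioc (0:ℝ) x,
          ENNReal.ofReal |ka (x - y) y * b (x - y) * (b y - btil y)| from
        lintegral_indicator measurableSet_Ioc _, lint_abs_eq h3]
    · rw [ENNReal.ofReal_mul (by norm_num : (0:ℝ) ≤ 1/2)]
      congr 1
      rw [show (∫⁻ y, U2 (x, y)) = ∫⁻ y in Ioc (0:ℝ) x,
          ENNReal.ofReal |ka (x - y) y * (b (x - y) - btil (x - y)) * btil y| from
        lintegral_indicator measurableSet_Ioc _, lint_abs_eq h4]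
    · exact ENNReal.ofReal_mul (mul_nonneg hK hC0)
    · exact ENNReal.ofReal_mul (mul_nonneg hK hD0)
    · exact ENNReal.ofReal_mul hM
  -- measurability of the pieces of F
  have hF1m : Measurable (fun x => ENNReal.ofReal (1/2) * ∫⁻ y, U1 (x, y)) :=
    (hU1m.lintegral_prod_right').const_mul _
  have hF2m : Measurable (fun x => ENNReal.ofReal (1/2) * ∫⁻ y, U2 (x, y)) :=
    (hU2m.lintegral_prod_right').const_mul _
  have hF3m : Measurable (fun x => ENNReal.ofReal (K * C0) * ENNReal.ofReal |b x - btil x|) :=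
    (hdm.abs.ennreal_ofReal).const_mul _
  have hF4m : Measurable (fun x => ENNReal.ofReal (K * D) * ENNReal.ofReal |btil x|) :=
    (hbtil.abs.ennreal_ofReal).const_mul _
  have hF5m : Measurable (fun x => ENNReal.ofReal M * ENNReal.ofReal |b x - btil x|) :=
    (hdm.abs.ennreal_ofReal).const_mul _
  have hT1 : (∫⁻ x in Ioc (0:ℝ) xbar, ENNReal.ofReal (1/2) * ∫⁻ y, U1 (x, y))
      ≤ ENNReal.ofReal (1/2)
        * (ENNReal.ofReal K * ENNReal.ofReal C0 * ENNReal.ofReal D) := by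
    rw [lintegral_const_mul _ (hU1m.lintegral_prod_right')]
    refine mul_le_mul_right ?_ _
    have e1 : (∫⁻ x in Ioc (0:ℝ) xbar, ∫⁻ y, U1 (x, y))
        = ∫⁻ x in Ioc (0:ℝ) xbar, ∫⁻ y in Ioc (0:ℝ) x,
            ENNReal.ofReal |ka (x - y) y * b (x - y) * (b y - btil y)| :=
      lintegral_congr fun x => lintegral_indicator measurableSet_Ioc _
    rw [e1]
    refine le_trans (conv_lintegral_le hka_meas hka hb hdm) ?_
    rw [hLd]
    exact mul_le_mul_left (mul_le_mul_right hLb _) _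
  have hT2 : (∫⁻ x in Ioc (0:ℝ) xbar, ENNReal.ofReal (1/2) * ∫⁻ y, U2 (x, y))
      ≤ ENNReal.ofReal (1/2)
        * (ENNReal.ofReal K * ENNReal.ofReal D * ENNReal.ofReal C0) := by
    rw [lintegral_const_mul _ (hU2m.lintegral_prod_right')]
    refine mul_le_mul_right ?_ _
    have e2 : (∫⁻ x in Ioc (0:ℝ) xbar, ∫⁻ y, U2 (x, y))
        = ∫⁻ x in Ioc (0:ℝ) xbar, ∫⁻ y in Ioc (0:ℝ) x,
            ENNReal.ofReal |ka (x - y) y * (b (x - y) - btil (x - y)) * btil y| :=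
      lintegral_congr fun x => lintegral_indicator measurableSet_Ioc _
    rw [e2]
    refine le_trans (conv_lintegral_le hka_meas hka hdm hbtil) ?_
    rw [hLd]
    exact mul_le_mul_right hLbtil _
  have hT3 : (∫⁻ x in Ioc (0:ℝ) xbar,
        ENNReal.ofReal (K * C0) * ENNReal.ofReal |b x - btil x|)
      = ENNReal.ofReal (K * C0) * ENNReal.ofReal D := by
    rw [lintegral_const_mul _ (hdm.abs.ennreal_ofReal), hLd]
  have hT4 : (∫⁻ x in Ioc (0:ℝ) xbar, ENNReal.ofReal (K * D) * ENNReal.ofReal |btil x|)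
      ≤ ENNReal.ofReal (K * D) * ENNReal.ofReal C0 := by
    rw [lintegral_const_mul _ (hbtil.abs.ennreal_ofReal)]
    exact mul_le_mul_right hLbtil _
  have hT5 : (∫⁻ x in Ioc (0:ℝ) xbar, ENNReal.ofReal M * ENNReal.ofReal |b x - btil x|)
      = ENNReal.ofReal M * ENNReal.ofReal D := by
    rw [lintegral_const_mul _ (hdm.abs.ennreal_ofReal), hLd]
  calc (∫⁻ x in Ioc (0:ℝ) xbar, ENNReal.ofReal
        |(aggOp xbar ka b x + remOp μ b x) - (aggOp xbar ka btil x + remOp μ btil x)|)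
      ≤ ∫⁻ x in Ioc (0:ℝ) xbar, F x := lintegral_mono_ae hbound
    _ = (∫⁻ x in Ioc (0:ℝ) xbar, ENNReal.ofReal (1/2) * ∫⁻ y, U1 (x, y))
        + (∫⁻ x in Ioc (0:ℝ) xbar, ENNReal.ofReal (1/2) * ∫⁻ y, U2 (x, y))
        + (∫⁻ x in Ioc (0:ℝ) xbar,
            ENNReal.ofReal (K * C0) * ENNReal.ofReal |b x - btil x|)
        + (∫⁻ x in Ioc (0:ℝ) xbar, ENNReal.ofReal (K * D) * ENNReal.ofReal |btil x|)
        + (∫⁻ x in Ioc (0:ℝ) xbar, ENNReal.ofReal M * ENNReal.ofReal |b x - btil x|) := by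
        simp only [hF]
        rw [lintegral_add_right _ hF5m, lintegral_add_right _ hF4m,
          lintegral_add_right _ hF3m, lintegral_add_right _ hF2m]
    _ ≤ ENNReal.ofReal (1/2) * (ENNReal.ofReal K * ENNReal.ofReal C0 * ENNReal.ofReal D)
        + ENNReal.ofReal (1/2) * (ENNReal.ofReal K * ENNReal.ofReal D * ENNReal.ofReal C0)
        + ENNReal.ofReal (K * C0) * ENNReal.ofReal D
        + ENNReal.ofReal (K * D) * ENNReal.ofReal C0
        + ENNReal.ofReal M * ENNReal.ofReal D :=
        add_le_add (add_le_add (add_le_add (add_le_add hT1 hT2) hT3.le) hT4) hT5.le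
    _ = ENNReal.ofReal ((3 * C0 * K + M) * D) := final_arith hK hC0 hD0 hM

end MainProof
end

section
/- Fix x̄ > 0 and K ≥ 0. Let k_a : ℝ × ℝ → ℝ be measurable with |k_a(x, y)| ≤ K on [0, x̄] × [0, x̄], and let b : ℝ → ℝ be measurable and integrable on [0, x̄]. Define A[b](x) = (1/2)∫₀^{x} k_a(x − y, y) b(x − y) b(y) dy − b(x)∫₀^{x̄} k_a(x, y) b(y) dy. Then ∫₀^{x̄} |A[b](x)| dx ≤ (3/2) · K · (∫₀^{x̄} |b(x)| dx)². -/
set_option maxHeartbeats 1000000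

open MeasureTheory intervalIntegral Convolution

/-- The aggregation operator maps `L¹([0, x̄])` into itself:
`‖A[b]‖₁ ≤ (3/2)‖k_a‖_∞ ‖b‖₁²`. -/
theorem aggOp_L1_bound
    (xbar : ℝ) (hxbar : 0 < xbar) (K : ℝ) (hK : 0 ≤ K)
    (ka : ℝ → ℝ → ℝ) (hka_meas : Measurable (Function.uncurry ka))
    (hka : ∀ x ∈ Set.Icc (0 : ℝ) xbar, ∀ y ∈ Set.Icc (0 : ℝ) xbar, |ka x y| ≤ K)
    (b : ℝ → ℝ) (hb : Measurable b) (hbI : IntegrableOn b (Set.Icc 0 xbar)) :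
    (∫ x in (0 : ℝ)..xbar, |aggOp xbar ka b x|) ≤
      (3 / 2) * K * (∫ x in (0 : ℝ)..xbar, |b x|) ^ 2 := by
  set f : ℝ → ℝ := (Set.Icc (0:ℝ) xbar).indicator (fun t => |b t|) with hfdef
  have hfnn : ∀ t, 0 ≤ f t := fun t => Set.indicator_nonneg (fun s _ => abs_nonneg _) _
  have hf : Integrable f := IntegrableOn.integrable_indicator hbI.abs measurableSet_Icc
  set L : ℝ →L[ℝ] ℝ →L[ℝ] ℝ := ContinuousLinearMap.mul ℝ ℝ with hLdef
  set c : ℝ → ℝ := f ⋆[L] f with hc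
  set I : ℝ := ∫ x in (0:ℝ)..xbar, |b x| with hIdef
  have hIoc : I = ∫ x in Set.Ioc (0:ℝ) xbar, |b x| := integral_of_le hxbar.le
  have hIeq : ∫ x, f x = I := by
    rw [hfdef, MeasureTheory.integral_indicator measurableSet_Icc, hIoc, integral_Icc_eq_integral_Ioc]
  have hInn : 0 ≤ I := by
    rw [hIoc]; exact setIntegral_nonneg measurableSet_Ioc fun x _ => abs_nonneg _
  have hcint : Integrable c := hf.integrable_convolution L hf
  have hcval : ∀ x, c x = ∫ y, f y * f (x - y) := fun x => rfl
  have hcnn : ∀ x, 0 ≤ c x := fun x =>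
    integral_nonneg fun y => mul_nonneg (hfnn y) (hfnn _)
  have hcI : ∫ x, c x = I * I := by
    rw [hc, integral_convolution L hf hf, hIeq]; rfl
  have key : ∀ᵐ x, x ∈ Set.Ioc (0:ℝ) xbar →
      |aggOp xbar ka b x| ≤ (1/2) * (K * c x) + |b x| * (K * I) := by
    filter_upwards [hf.ae_convolution_exists L hf] with x hx hxmem
    have hx' : Integrable (fun y => f y * f (x - y)) := hx
    have hx0 : 0 < x := hxmem.1
    have hxx : x ≤ xbar := hxmem.2
    have hbnd1 : |∫ y in (0:ℝ)..x, ka (x - y) y * b (x - y) * b y| ≤ K * c x := by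
      rw [integral_of_le hx0.le]
      have hbig : IntegrableOn (fun y => K * (f y * f (x - y))) (Set.Ioc 0 x) :=
        (hx'.const_mul K).integrableOn
      calc |∫ y in Set.Ioc (0:ℝ) x, ka (x - y) y * b (x - y) * b y|
          = ‖∫ y in Set.Ioc (0:ℝ) x, ka (x - y) y * b (x - y) * b y‖ :=
            (Real.norm_eq_abs _).symm
        _ ≤ ∫ y in Set.Ioc (0:ℝ) x, ‖ka (x - y) y * b (x - y) * b y‖ :=
            norm_integral_le_integral_norm _
        _ ≤ ∫ y in Set.Ioc (0:ℝ) x, K * (f y * f (x - y)) := by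
            refine integral_mono_of_nonneg (ae_of_all _ fun y => norm_nonneg _) hbig
              (ae_restrict_of_forall_mem measurableSet_Ioc fun y hy => ?_)
            have hy1 : y ∈ Set.Icc (0:ℝ) xbar := ⟨hy.1.le, hy.2.trans hxx⟩
            have hy2 : x - y ∈ Set.Icc (0:ℝ) xbar :=
              ⟨by linarith [hy.2], by linarith [hy.1]⟩
            have hk := hka _ hy2 _ hy1
            rw [hfdef]
            simp only [Set.indicator_of_mem hy1, Set.indicator_of_mem hy2,
              Real.norm_eq_abs, abs_mul]
            calc |ka (x - y) y| * |b (x - y)| * |b y|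
                ≤ K * |b (x - y)| * |b y| :=
                  mul_le_mul_of_nonneg_right
                    (mul_le_mul_of_nonneg_right hk (abs_nonneg _)) (abs_nonneg _)
              _ = K * (|b y| * |b (x - y)|) := by ring
        _ ≤ ∫ y, K * (f y * f (x - y)) :=
            setIntegral_le_integral (hx'.const_mul K)
              (ae_of_all _ fun y => mul_nonneg hK (mul_nonneg (hfnn _) (hfnn _)))
        _ = K * c x := by rw [MeasureTheory.integral_const_mul, hcval]
    have hbnd2 : |∫ y in (0:ℝ)..xbar, ka x y * b y| ≤ K * I := by
      rw [integral_of_le hxbar.le]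
      have hxIcc : x ∈ Set.Icc (0:ℝ) xbar := ⟨hx0.le, hxx⟩
      have hbig : IntegrableOn (fun y => K * |b y|) (Set.Ioc 0 xbar) :=
        (hbI.mono_set Set.Ioc_subset_Icc_self).abs.const_mul K
      calc |∫ y in Set.Ioc (0:ℝ) xbar, ka x y * b y|
          = ‖∫ y in Set.Ioc (0:ℝ) xbar, ka x y * b y‖ := (Real.norm_eq_abs _).symm
        _ ≤ ∫ y in Set.Ioc (0:ℝ) xbar, ‖ka x y * b y‖ := norm_integral_le_integral_norm _
        _ ≤ ∫ y in Set.Ioc (0:ℝ) xbar, K * |b y| := by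
            refine integral_mono_of_nonneg (ae_of_all _ fun y => norm_nonneg _) hbig
              (ae_restrict_of_forall_mem measurableSet_Ioc fun y hy => ?_)
            show ‖ka x y * b y‖ ≤ K * |b y|
            rw [Real.norm_eq_abs, abs_mul]
            exact mul_le_mul_of_nonneg_right (hka x hxIcc y ⟨hy.1.le, hy.2⟩) (abs_nonneg _)
        _ = K * I := by rw [MeasureTheory.integral_const_mul, hIoc]
    have habs : |aggOp xbar ka b x| ≤
        (1/2) * |∫ y in (0:ℝ)..x, ka (x - y) y * b (x - y) * b y|
          + |b x| * |∫ y in (0:ℝ)..xbar, ka x y * b y| := by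
      rw [aggOp]
      refine (abs_sub _ _).trans ?_
      rw [abs_mul, abs_mul, (by norm_num : |(1:ℝ)/2| = 1/2)]
    refine habs.trans ?_
    have h1 : (1/2 : ℝ) * |∫ y in (0:ℝ)..x, ka (x - y) y * b (x - y) * b y|
        ≤ (1/2) * (K * c x) := by linarith
    have h2 : |b x| * |∫ y in (0:ℝ)..xbar, ka x y * b y| ≤ |b x| * (K * I) :=
      mul_le_mul_of_nonneg_left hbnd2 (abs_nonneg _)
    linarith
  rw [hIdef, integral_of_le hxbar.le]
  have hGb : IntegrableOn (fun x => |b x| * (K * I)) (Set.Ioc 0 xbar) :=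
    (hbI.mono_set Set.Ioc_subset_Icc_self).abs.mul_const (K * I)
  have hGc : IntegrableOn (fun x => (1/2) * (K * c x)) (Set.Ioc 0 xbar) :=
    ((hcint.const_mul K).const_mul (1/2)).integrableOn
  calc ∫ x in Set.Ioc (0:ℝ) xbar, |aggOp xbar ka b x|
      ≤ ∫ x in Set.Ioc (0:ℝ) xbar, ((1/2) * (K * c x) + |b x| * (K * I)) :=
        integral_mono_of_nonneg (ae_of_all _ fun x => abs_nonneg _) (hGc.add hGb)
          ((ae_restrict_iff' measurableSet_Ioc).2 key)
    _ = (1/2) * (K * ∫ x in Set.Ioc (0:ℝ) xbar, c x)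
          + (∫ x in Set.Ioc (0:ℝ) xbar, |b x|) * (K * I) := by
        rw [integral_add hGc hGb, MeasureTheory.integral_const_mul, MeasureTheory.integral_const_mul,
          MeasureTheory.integral_mul_const]
    _ ≤ (3/2) * K * I ^ 2 := by
        have h1 : ∫ x in Set.Ioc (0:ℝ) xbar, c x ≤ I * I :=
          (setIntegral_le_integral hcint (ae_of_all _ hcnn)).trans hcI.le
        rw [← hIoc]
        nlinarith [mul_nonneg hK (sub_nonneg.2 h1)]
end
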